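/- In the graph of the previous example with Ω = {x₀}, ∂_mΩ = {x₁, x₂, ...}, p > 1, and a_p(x,y,r) = |r|^{p-2}r, the function u defined by u(x₀) = 0, u(x_n) = 2^{n/(p-1)}, satisfies: (i) u(x₀) - Σ_{n≥1} |u(x_n) - u(x₀)|^{p-2}(u(x_n)-u(x₀)) m_{x₀}({x_n}) = -12/5, and (ii) -|u(x₀)-u(x_n)|^{p-2}(u(x₀)-u(x_n)) m_{x_n}({x₀}) = (6/7)^n for each n ≥ 1. In particular u solves the nonlocal Neumann problem with data v(x₀) = -12/5 ∈ L^∞(Ω,ν) and φ(x_n) = (6/7)^n ∈ L^∞(∂_mΩ,ν), yet u ∉ L^∞(Ω_m, ν). -/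
import Mathlib


/-- In the graph with `m_{x₀}({x_n}) = 6/7ⁿ` and
`m_{x_n}({x₀}) = (3/7)ⁿ`, `Ω = {x₀}`, `a_p(x,y,r) = |r|^{p-2} r` and
`u(x₀) = 0`, `u(x_n) = 2^{n/(p-1)}`:
(i) `u(x₀) - Σ_{n≥1} |u(x_n)-u(x₀)|^{p-2}(u(x_n)-u(x₀)) · 6/7ⁿ = -12/5`;
(ii) `-|u(x₀)-u(x_n)|^{p-2}(u(x₀)-u(x_n)) · (3/7)ⁿ = (6/7)ⁿ` for `n ≥ 1`;
(iii) `u` is unbounded, i.e. `u ∉ L^∞(Ω_m, ν)`. -/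
theorem exampleGraph_unbounded_solution
    (p : ℝ) (hp : 1 < p)
    (u : ℕ → ℝ)
    (hu0 : u 0 = 0)
    (hun : ∀ n : ℕ, n ≠ 0 → u n = (2 : ℝ) ^ ((n : ℝ) / (p - 1))) :
    (u 0 - ∑' n : ℕ,
        (if n = 0 then 0
         else |u n - u 0| ^ (p - 2) * (u n - u 0) * (6 * (1 / 7 : ℝ) ^ n)) = -(12 / 5))
    ∧ (∀ n : ℕ, n ≠ 0 →
        -(|u 0 - u n| ^ (p - 2) * (u 0 - u n)) * ((3 / 7 : ℝ) ^ n) = (6 / 7 : ℝ) ^ n)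
    ∧ (∀ M : ℝ, ∃ n : ℕ, M < u n) := by
  have hp1 : (0 : ℝ) < p - 1 := by linarith
  have hpne : p - 1 ≠ 0 := ne_of_gt hp1
  -- key : for n ≠ 0, |u n|^(p-2) * u n = 2^n
  have key : ∀ n : ℕ, n ≠ 0 → |u n| ^ (p - 2) * u n = (2 : ℝ) ^ n := by
    intro n hn
    have hucn : u n = (2 : ℝ) ^ ((n : ℝ) / (p - 1)) := hun n hn
    have hpos : (0 : ℝ) < u n := by
      rw [hucn]; exact Real.rpow_pos_of_pos two_pos _
    rw [abs_of_pos hpos, hucn, ← Real.rpow_natCast 2 n,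
      ← Real.rpow_mul (by norm_num : (0:ℝ) ≤ 2), ← Real.rpow_add two_pos]
    congr 1
    field_simp
    ring
  refine ⟨?_, ?_, ?_⟩
  · -- (i)
    have hfun : ∀ n : ℕ,
        (if n = 0 then (0:ℝ)
         else |u n - u 0| ^ (p - 2) * (u n - u 0) * (6 * (1 / 7 : ℝ) ^ n))
        = (if n = 0 then (0:ℝ) else 6 * (2 / 7 : ℝ) ^ n) := by
      intro n
      by_cases hn : n = 0
      · simp [hn]
      · simp only [hn, if_false, hu0, sub_zero]
        rw [key n hn]
        simp only [div_pow, one_pow]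
        ring
    have hsumm : Summable (fun n : ℕ => (if n = 0 then (0:ℝ) else 6 * (2 / 7 : ℝ) ^ n)) := by
      apply Summable.of_nonneg_of_le (fun n => ?_) (fun n => ?_)
        ((summable_geometric_of_lt_one (by norm_num : (0:ℝ) ≤ 2/7) (by norm_num)).mul_left 6)
      · positivity
      · by_cases hn : n = 0 <;> simp [hn] <;> positivity
    have : (∑' n : ℕ, (if n = 0 then (0:ℝ) else 6 * (2 / 7 : ℝ) ^ n)) = 12 / 5 := by
      rw [Summable.tsum_eq_zero_add hsumm]
      simp only [if_pos rfl, Nat.succ_ne_zero, if_false, zero_add]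
      have : (fun n : ℕ => 6 * (2 / 7 : ℝ) ^ (n + 1))
          = fun n : ℕ => (12 / 7) * (2 / 7 : ℝ) ^ n := by
        funext n; rw [pow_succ]; ring
      rw [this, tsum_mul_left, tsum_geometric_of_lt_one (by norm_num) (by norm_num)]
      norm_num
    rw [tsum_congr hfun, this, hu0]
    norm_num
  · -- (ii)
    intro n hn
    rw [hu0, zero_sub, abs_neg, mul_neg, neg_neg, key n hn, ← mul_pow]
    norm_num
  · -- (iii)
    intro M
    set b : ℝ := (2 : ℝ) ^ ((1 : ℝ) / (p - 1)) with hb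
    have hb1 : 1 < b := Real.one_lt_rpow_iff_of_pos two_pos |>.2 (Or.inl ⟨one_lt_two, by positivity⟩)
    obtain ⟨n, hn⟩ := pow_unbounded_of_one_lt (max M 1) hb1
    have hn0 : n ≠ 0 := by
      rintro rfl
      simp only [pow_zero] at hn
      exact absurd (le_max_right M 1) (not_le.2 hn)
    refine ⟨n, ?_⟩
    have : u n = b ^ n := by
      rw [hun n hn0, hb, ← Real.rpow_natCast ((2:ℝ) ^ ((1:ℝ)/(p-1))) n,
        ← Real.rpow_mul (by norm_num)]
      congr 1
      field_simp
    rw [this]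
    exact lt_of_le_of_lt (le_max_left M 1) hn
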